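/- Let m ≤ n be positive integers and γ = (a_1,…,a_m) ∈ Γ(m,n) with γ ≠ (n−m+1,…,n), with block data k(0),…,k(t+1) and tuples ζ_0,…,ζ_t and σ_1,…,σ_t. Let b = (b_1,…,b_m) ∈ Γ(m,n) with b ≥ γ. Then: (1) for every 0 ≤ i ≤ t, b ≥ ζ_i if and only if b_{k(i+1)} > a_{k(i+1)}; (2) for every 1 ≤ i ≤ t, b ≥ σ_i if and only if b_{k(i)} ≥ a_{k(i)+1}. -/

import Mathlib

open scoped BigOperators TensorProduct

set_option maxHeartbeats 1000000
set_option synthInstance.maxHeartbeats 400000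

noncomputable section

/-- The trace ideal of an `R`-module `M`: the sum of the images of all
`R`-linear maps `M → R`. -/
def traceIdeal (R : Type*) [CommRing R] (M : Type*) [AddCommGroup M] [Module R M] :
    Ideal R :=
  ⨆ f : M →ₗ[R] R, LinearMap.range f

/-- `Γ(m,N)`: strictly increasing `m`-tuples with entries in `{1,…,N}`,
encoded as functions `Fin m → ℕ` and ordered componentwise. -/
def GammaSet (m N : ℕ) : Set (Fin m → ℕ) :=
  {a | StrictMono a ∧ ∀ i, 1 ≤ a i ∧ a i ≤ N}

/-- Extended entries of a tuple `a ∈ Γ(m,N)`: `aext j = a_j` for `1 ≤ j ≤ m`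
(1-based indexing) and `aext (m+1) = N+1`. -/
def aext (m N : ℕ) (a : Fin m → ℕ) (j : ℕ) : ℕ :=
  if h : j - 1 < m then a ⟨j - 1, h⟩ else N + 1

/-- Block data for `γ ∈ Γ(m,N)`: `k 0 = 0`, `k` is strictly increasing on
`{0,…,t+1}` and `k 1 < ⋯ < k (t+1)` lists exactly the indices `j ∈ {1,…,m}`
with `a_{j+1} - a_j > 1` (where `a_{m+1} = N+1`). -/
def IsBlockData (m N : ℕ) (a : Fin m → ℕ) (t : ℕ) (k : ℕ → ℕ) : Prop :=
  k 0 = 0 ∧ (∀ i j, i < j → j ≤ t + 1 → k i < k j) ∧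
    ∀ j, (∃ i, 1 ≤ i ∧ i ≤ t + 1 ∧ k i = j) ↔
      (1 ≤ j ∧ j ≤ m ∧ 1 < aext m N a (j + 1) - aext m N a j)

/-- `ζ_i`: the tuple `γ` with the entry `a_{k(i+1)}` replaced by `a_{k(i+1)} + 1`. -/
def zetaT (m : ℕ) (a : Fin m → ℕ) (k : ℕ → ℕ) (i : ℕ) : Fin m → ℕ :=
  fun j => if (j : ℕ) + 1 = k (i + 1) then a j + 1 else a j

/-- `σ_i`: the strictly increasing tuple whose entry set is
`({a_1,…,a_m} ∖ {a_{k(i)}}) ∪ {a_{k(i+1)} + 1}`. -/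
def sigmaT (m N : ℕ) (a : Fin m → ℕ) (k : ℕ → ℕ) (i : ℕ) : Fin m → ℕ :=
  fun j =>
    if (j : ℕ) + 1 < k i then a j
    else if (j : ℕ) + 1 < k (i + 1) then aext m N a ((j : ℕ) + 2)
    else if (j : ℕ) + 1 = k (i + 1) then a j + 1
    else a j

/-- `κ_i = Σ_{j=0}^{i} (k(j+1) − k(j)) + Σ_{j=i}^{t} (a_{k(j+1)+1} − a_{k(j+1)} − 1)`. -/
def kappaT (m N : ℕ) (a : Fin m → ℕ) (t : ℕ) (k : ℕ → ℕ) (i : ℕ) : ℕ :=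
  (∑ j ∈ Finset.range (i + 1), (k (j + 1) - k j)) +
    ∑ j ∈ Finset.Icc i t, (aext m N a (k (j + 1) + 1) - aext m N a (k (j + 1)) - 1)

/-- `κ = max_{0 ≤ i ≤ t} κ_i`. -/
def kappaMax (m N : ℕ) (a : Fin m → ℕ) (t : ℕ) (k : ℕ → ℕ) : ℕ :=
  (Finset.range (t + 1)).sup (kappaT m N a t k)

/-- `κ' = min_{0 ≤ i ≤ t} κ_i`. -/
def kappaMin (m N : ℕ) (a : Fin m → ℕ) (t : ℕ) (k : ℕ → ℕ) : ℕ :=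
  (Finset.range (t + 1)).inf' (Finset.nonempty_range_iff.mpr (Nat.succ_ne_zero t))
    (kappaT m N a t k)

/-- `i ∈ S_h`, i.e. `κ − κ_i ≥ h`. -/
def memS (m N : ℕ) (a : Fin m → ℕ) (t : ℕ) (k : ℕ → ℕ) (h i : ℕ) : Prop :=
  h ≤ kappaMax m N a t k - kappaT m N a t k i

/-- `i ∈ U_h`: `1 ≤ i ≤ t` and exactly one of `i-1`, `i` belongs to `S_h`. -/
def memU (m N : ℕ) (a : Fin m → ℕ) (t : ℕ) (k : ℕ → ℕ) (h i : ℕ) : Prop :=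
  1 ≤ i ∧ i ≤ t ∧ ¬ (memS m N a t k h i ↔ memS m N a t k h (i - 1))

/-- The maximal minor `[a]` of the generic `m × n` matrix `(X_{uv})`
(rows `1,…,m`, columns `a_1,…,a_m`), inside `B[X_{ij} : i,j ≥ 1]`. -/
def minor (B : Type*) [CommRing B] (m : ℕ) (a : Fin m → ℕ) : MvPolynomial (ℕ × ℕ) B :=
  (Matrix.of fun u v : Fin m => MvPolynomial.X ((u : ℕ) + 1, a v)).det

/-- `G_B(X)`: the `B`-subalgebra generated by all maximal minors `[a]`, `a ∈ Γ(m,n)`. -/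
def schubertAlgebra (B : Type*) [CommRing B] (m n : ℕ) :
    Subalgebra B (MvPolynomial (ℕ × ℕ) B) :=
  Algebra.adjoin B ((fun a => minor B m a) '' GammaSet m n)

lemma minor_mem (B : Type*) [CommRing B] (m n : ℕ) {a : Fin m → ℕ}
    (ha : a ∈ GammaSet m n) : minor B m a ∈ schubertAlgebra B m n :=
  Algebra.subset_adjoin ⟨a, ha, rfl⟩

/-- `J_B(X; γ)`: the ideal of `G_B(X)` generated by all `[δ]` with `δ ≱ γ`. -/
def JIdeal (B : Type*) [CommRing B] (m n : ℕ) (γ : Fin m → ℕ) :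
    Ideal (schubertAlgebra B m n) :=
  Ideal.span {x | ∃ a ∈ GammaSet m n, ¬ γ ≤ a ∧
    (x : MvPolynomial (ℕ × ℕ) B) = minor B m a}

/-- The Schubert cycle `G_B(X; γ) = G_B(X)/J_B(X;γ)`. -/
abbrev SchubertCycle (B : Type*) [CommRing B] (m n : ℕ) (γ : Fin m → ℕ) :=
  schubertAlgebra B m n ⧸ JIdeal B m n γ

/-- `J_B(x; δ) = J_B(X;δ)/J_B(X;γ)`, an ideal of `G_B(X;γ)`. -/
def JxIdeal (B : Type*) [CommRing B] (m n : ℕ) (γ δ : Fin m → ℕ) :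
    Ideal (SchubertCycle B m n γ) :=
  (JIdeal B m n δ).map (Ideal.Quotient.mk (JIdeal B m n γ))

end

lemma aext_of_lt {m N : ℕ} (a : Fin m → ℕ) {j : ℕ} (h : j - 1 < m) :
    aext m N a j = a ⟨j - 1, h⟩ := dif_pos h

lemma aext_of_ge {m N : ℕ} (a : Fin m → ℕ) {j : ℕ} (h : m ≤ j - 1) :
    aext m N a j = N + 1 := dif_neg (by omega)

lemma aext_coe {m N : ℕ} (a : Fin m → ℕ) (j : Fin m) :
    aext m N a ((j : ℕ) + 1) = a j := by
  rw [aext_of_lt a (show (j : ℕ) + 1 - 1 < m by simpa using j.2)]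
  exact congrArg a (Fin.ext (by simp))

lemma aext_lt_succ {m N : ℕ} {a : Fin m → ℕ} (ha : a ∈ GammaSet m N)
    {j : ℕ} (h1 : 1 ≤ j) (h2 : j ≤ m) : aext m N a j < aext m N a (j + 1) := by
  obtain ⟨hmono, hbound⟩ := ha
  by_cases hj : j < m
  · rw [aext_of_lt a (show j - 1 < m by omega), aext_of_lt a (show j + 1 - 1 < m by omega)]
    exact hmono (Fin.mk_lt_mk.mpr (by omega))
  · rw [aext_of_lt a (show j - 1 < m by omega), aext_of_ge a (by omega)]
    have := (hbound ⟨j - 1, by omega⟩).2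
    omega

lemma aext_add_le {m N : ℕ} {a : Fin m → ℕ} (ha : a ∈ GammaSet m N)
    {p : ℕ} (h1 : 1 ≤ p) (d : ℕ) (h2 : p + d ≤ m) :
    aext m N a p + d ≤ aext m N a (p + d) := by
  induction d with
  | zero => simp
  | succ d ih =>
    have h3 : p + d ≤ m := by omega
    have := aext_lt_succ ha (show 1 ≤ p + d by omega) h3
    have := ih (by omega)
    have heq : p + (d + 1) = (p + d) + 1 := by omega
    rw [heq]
    omega

/-- For `b ∈ Γ(m,n)` with `b ≥ γ`:
(1) `b ≥ ζ_i` iff `b_{k(i+1)} > a_{k(i+1)}`; (2) `b ≥ σ_i` iff `b_{k(i)} ≥ a_{k(i)+1}`. -/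
theorem ge_zeta_iff_and_ge_sigma_iff {m n : ℕ} (hm : 0 < m) (hmn : m ≤ n)
    (γ : Fin m → ℕ) (hγ : γ ∈ GammaSet m n)
    (hγtop : γ ≠ fun j : Fin m => n - m + 1 + (j : ℕ))
    (t : ℕ) (k : ℕ → ℕ) (hbd : IsBlockData m n γ t k)
    (b : Fin m → ℕ) (hb : b ∈ GammaSet m n) (hγb : γ ≤ b) :
    (∀ i, i ≤ t →
      (zetaT m γ k i ≤ b ↔ aext m n γ (k (i + 1)) < aext m n b (k (i + 1)))) ∧
    (∀ i, 1 ≤ i → i ≤ t →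
      (sigmaT m n γ k i ≤ b ↔ aext m n γ (k i + 1) ≤ aext m n b (k i))) := by
  obtain ⟨hk0, hkmono, hkgap⟩ := hbd
  have hgap : ∀ i, 1 ≤ i → i ≤ t + 1 →
      1 ≤ k i ∧ k i ≤ m ∧ 1 < aext m n γ (k i + 1) - aext m n γ (k i) :=
    fun i h1 h2 => (hkgap (k i)).mp ⟨i, h1, h2, rfl⟩
  have hnogap : ∀ j, 1 ≤ j → j ≤ m → (∀ i, 1 ≤ i → i ≤ t + 1 → k i ≠ j) →
      aext m n γ (j + 1) = aext m n γ j + 1 := by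
    intro j h1 h2 hno
    have h3 : ¬ (1 ≤ j ∧ j ≤ m ∧ 1 < aext m n γ (j + 1) - aext m n γ j) := by
      intro h
      obtain ⟨i, hi1, hi2, hi3⟩ := (hkgap j).mpr h
      exact hno i hi1 hi2 hi3
    have h4 := aext_lt_succ hγ h1 h2
    omega
  constructor
  · -- Part 1: ζ
    intro i hi
    have hK := hgap (i + 1) (by omega) (by omega)
    have hKm : k (i + 1) - 1 < m := by omega
    have hKcoe : ((⟨k (i + 1) - 1, hKm⟩ : Fin m) : ℕ) + 1 = k (i + 1) := by
      simp only [Fin.val_mk]; omega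
    have hγK : aext m n γ (k (i + 1)) = γ ⟨k (i + 1) - 1, hKm⟩ := aext_of_lt γ hKm
    have hbK : aext m n b (k (i + 1)) = b ⟨k (i + 1) - 1, hKm⟩ := aext_of_lt b hKm
    rw [hγK, hbK]
    constructor
    · intro hζ
      have h5 := hζ ⟨k (i + 1) - 1, hKm⟩
      simp only [zetaT, if_pos hKcoe] at h5
      omega
    · intro hlt j
      simp only [zetaT]
      by_cases hj : (j : ℕ) + 1 = k (i + 1)
      · have hjeq : j = ⟨k (i + 1) - 1, hKm⟩ := Fin.ext (by simp only [Fin.val_mk]; omega)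
        rw [if_pos hj, hjeq]
        omega
      · rw [if_neg hj]
        exact hγb j
  · -- Part 2: σ
    intro i hi1 hi2
    have hK := hgap i hi1 (by omega)
    have hK' := hgap (i + 1) (by omega) (by omega)
    have hKK' : k i < k (i + 1) := hkmono i (i + 1) (by omega) (by omega)
    -- consecutiveness within the block
    have hcons : ∀ d, k i + 1 + d ≤ k (i + 1) →
        aext m n γ (k i + 1 + d) = aext m n γ (k i + 1) + d := by
      intro d
      induction d with
      | zero => simp
      | succ d ih =>
        intro hd
        have hprev := ih (by omega)
        have hng : ∀ i', 1 ≤ i' → i' ≤ t + 1 → k i' ≠ k i + 1 + d := by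
          intro i' h1 h2 h3
          rcases lt_trichotomy i' i with h | h | h
          · have := hkmono i' i h (by omega); omega
          · subst h; omega
          · have h4 : i + 1 ≤ i' := by omega
            rcases eq_or_lt_of_le h4 with h5 | h5
            · rw [← h5] at h3; omega
            · have := hkmono (i + 1) i' h5 h2; omega
        have h6 := hnogap (k i + 1 + d) (by omega) (by omega) hng
        have heq : k i + 1 + (d + 1) = (k i + 1 + d) + 1 := by omega
        rw [heq, h6, hprev]
        omega
    have hKm : k i - 1 < m := by omega
    have hbK : aext m n b (k i) = b ⟨k i - 1, hKm⟩ := aext_of_lt b hKm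
    constructor
    · intro hσ
      have h5 := hσ ⟨k i - 1, hKm⟩
      have hc1 : ¬ ((⟨k i - 1, hKm⟩ : Fin m) : ℕ) + 1 < k i := by
        simp only [Fin.val_mk]; omega
      have hc2 : ((⟨k i - 1, hKm⟩ : Fin m) : ℕ) + 1 < k (i + 1) := by
        simp only [Fin.val_mk]; omega
      simp only [sigmaT, if_neg hc1, if_pos hc2] at h5
      have hc3 : ((⟨k i - 1, hKm⟩ : Fin m) : ℕ) + 2 = k i + 1 := by
        simp only [Fin.val_mk]; omega
      rw [hc3] at h5
      rw [hbK]
      exact h5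
    · intro hle j
      simp only [sigmaT]
      have hp1 : 1 ≤ (j : ℕ) + 1 := by omega
      have hpm : (j : ℕ) + 1 ≤ m := j.2
      have hbj : aext m n b ((j : ℕ) + 1) = b j := aext_coe b j
      have hγj : aext m n γ ((j : ℕ) + 1) = γ j := aext_coe γ j
      by_cases hc1 : (j : ℕ) + 1 < k i
      · rw [if_pos hc1]; exact hγb j
      · rw [if_neg hc1]
        have hbstep : aext m n b (k i) + ((j : ℕ) + 1 - k i) ≤ aext m n b ((j : ℕ) + 1) := by
          have h7 := aext_add_le hb (show 1 ≤ k i by omega) ((j : ℕ) + 1 - k i)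
            (show k i + ((j : ℕ) + 1 - k i) ≤ m by omega)
          have heq : k i + ((j : ℕ) + 1 - k i) = (j : ℕ) + 1 := by omega
          rw [heq] at h7
          exact h7
        by_cases hc2 : (j : ℕ) + 1 < k (i + 1)
        · rw [if_pos hc2]
          have hj2 : (j : ℕ) + 2 = ((j : ℕ) + 1) + 1 := by omega
          have h8 := hcons ((j : ℕ) + 1 - k i) (by omega)
          have heq : k i + 1 + ((j : ℕ) + 1 - k i) = ((j : ℕ) + 1) + 1 := by omega
          rw [heq] at h8
          rw [hj2, h8]
          omega
        · rw [if_neg hc2]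
          by_cases hc3 : (j : ℕ) + 1 = k (i + 1)
          · rw [if_pos hc3]
            have h9 := hcons (k (i + 1) - k i - 1) (by omega)
            have heq : k i + 1 + (k (i + 1) - k i - 1) = k (i + 1) := by omega
            rw [heq] at h9
            have h10 : aext m n γ ((j : ℕ) + 1) = aext m n γ (k (i + 1)) := by rw [hc3]
            have h11 : aext m n b ((j : ℕ) + 1) = aext m n b (k (i + 1)) := by rw [hc3]
            omega
          · rw [if_neg hc3]
            exact hγb j
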